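/- Let F be a finite field and λ₁ ≠ λ₂ be two nonzero elements of F. If a linear subspace C of Fⁿ × Fⁿ is simultaneously a 2-quasi λ₁-constacyclic code and a 2-quasi λ₂-constacyclic code, then the projection of C onto the first n coordinates is either {0} or all of Fⁿ (and likewise for the second projection). -/

import Mathlib

/-- The `λ`-constacyclic shift on `Fⁿ`. -/
def cshift {F : Type*} [Field F] {n : ℕ} [NeZero n] (lam : F) (a : Fin n → F) :
    Fin n → F :=
  fun i => (if i = 0 then lam else 1) * a (i - 1)

open scoped Fin.NatCast Fin.IntCast Fin.CommRing

theorem cshift_single {F : Type*} [Field F] {n : ℕ} [NeZero n] (lam : F) (m : Fin n) :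
    cshift lam (Pi.single m (1:F)) = Pi.single (m+1) (if m + 1 = 0 then lam else 1) := by
  funext i
  simp only [cshift, Pi.single_apply]
  rcases eq_or_ne i (m + 1) with h | h
  · subst h
    rw [if_pos rfl]
    have hms : m + 1 - 1 = m := add_sub_cancel_right m 1
    rw [hms, if_pos rfl, mul_one]
  · have hne : i - 1 ≠ m := fun hh => h (by rw [← hh]; ring)
    rw [if_neg h, if_neg hne, mul_zero]

theorem key_lemma {F : Type*} [Field F] {n : ℕ} [NeZero n]
    (lam₁ lam₂ : F) (h1 : lam₁ ≠ 0) (hd : lam₁ - lam₂ ≠ 0)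
    (D : Submodule F (Fin n → F))
    (hD1 : ∀ a ∈ D, cshift lam₁ a ∈ D)
    (hD2 : ∀ a ∈ D, cshift lam₂ a ∈ D) :
    D = ⊥ ∨ D = ⊤ := by
  by_cases hbot : D = ⊥
  · exact Or.inl hbot
  right
  obtain ⟨a, haD, ha0⟩ : ∃ a ∈ D, a ≠ 0 := by
    by_contra h
    push_neg at h
    exact hbot (le_bot_iff.mp fun x hx => h x hx)
  obtain ⟨j, hj⟩ : ∃ j, a j ≠ 0 := by
    by_contra h; push_neg at h; exact ha0 (funext h)
  have stepA : ∀ k : ℕ, ∃ b ∈ D, b (j + (k : Fin n)) ≠ 0 := by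
    intro k
    induction k with
    | zero => exact ⟨a, haD, by simpa using hj⟩
    | succ k ih =>
      obtain ⟨b, hbD, hb⟩ := ih
      refine ⟨cshift lam₁ b, hD1 b hbD, ?_⟩
      show (if (j + ((k+1 : ℕ) : Fin n)) = 0 then lam₁ else 1)
          * b (j + ((k+1 : ℕ) : Fin n) - 1) ≠ 0
      have heq : j + ((k+1 : ℕ) : Fin n) - 1 = j + (k : Fin n) := by
        push_cast; ring
      rw [heq]
      exact mul_ne_zero (by split <;> simp [h1]) hb
  obtain ⟨b, hbD, hb⟩ := stepA ((-1 - j : Fin n)).val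
  have hbl : b (-1) ≠ 0 := by
    have heq : j + ((((-1 - j : Fin n)).val : ℕ) : Fin n) = -1 := by
      rw [Fin.cast_val_eq_self]; ring
    rwa [heq] at hb
  have he0 : Pi.single (0 : Fin n) (1:F) ∈ D := by
    have hmem : cshift lam₁ b - cshift lam₂ b ∈ D := sub_mem (hD1 b hbD) (hD2 b hbD)
    have heq : cshift lam₁ b - cshift lam₂ b
        = ((lam₁ - lam₂) * b (-1)) • (Pi.single (0:Fin n) (1:F) : Fin n → F) := by
      funext i
      simp only [Pi.sub_apply, cshift, Pi.smul_apply, Pi.single_apply, smul_eq_mul]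
      rcases eq_or_ne i 0 with h | h
      · subst h
        rw [if_pos rfl, if_pos rfl, if_pos rfl, zero_sub, mul_one, sub_mul]
      · rw [if_neg h, if_neg h, if_neg h, mul_zero, sub_self]
    rw [heq] at hmem
    have hne : (lam₁ - lam₂) * b (-1) ≠ 0 := mul_ne_zero hd hbl
    have h' := D.smul_mem ((lam₁ - lam₂) * b (-1))⁻¹ hmem
    rwa [smul_smul, inv_mul_cancel₀ hne, one_smul] at h'
  have hsingle : ∀ k : ℕ, Pi.single ((k : Fin n)) (1:F) ∈ D := by
    intro k
    induction k with
    | zero => simpa using he0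
    | succ k ih =>
      have hmem := hD1 _ ih
      rw [cshift_single] at hmem
      set c := (if ((k : Fin n) + 1) = 0 then lam₁ else 1) with hc
      have hcne : c ≠ 0 := by rw [hc]; split <;> simp [h1]
      have h' := D.smul_mem c⁻¹ hmem
      rw [← Pi.single_smul, smul_eq_mul, inv_mul_cancel₀ hcne] at h'
      have hcast : (((k+1 : ℕ)) : Fin n) = (k : Fin n) + 1 := by push_cast; ring
      rwa [hcast]
  rw [eq_top_iff]
  intro x _
  have hx : x = ∑ i : Fin n, x i • (Pi.single i (1:F) : Fin n → F) := by
    funext j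
    simp [Pi.single_apply]
  rw [hx]
  refine Submodule.sum_mem D fun i _ => Submodule.smul_mem D _ ?_
  have := hsingle i.val
  rwa [Fin.cast_val_eq_self] at this

theorem stmt_0 {F : Type*} [Field F] [Fintype F] {n : ℕ} [NeZero n]
    (lam₁ lam₂ : F) (h1 : lam₁ ≠ 0) (h2 : lam₂ ≠ 0) (hne : lam₁ ≠ lam₂)
    (C : Submodule F ((Fin n → F) × (Fin n → F)))
    (hC1 : ∀ c ∈ C, (cshift lam₁ c.1, cshift lam₁ c.2) ∈ C)
    (hC2 : ∀ c ∈ C, (cshift lam₂ c.1, cshift lam₂ c.2) ∈ C) :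
    (C.map (LinearMap.fst F (Fin n → F) (Fin n → F)) = ⊥ ∨
       C.map (LinearMap.fst F (Fin n → F) (Fin n → F)) = ⊤) ∧
    (C.map (LinearMap.snd F (Fin n → F) (Fin n → F)) = ⊥ ∨
       C.map (LinearMap.snd F (Fin n → F) (Fin n → F)) = ⊤) := by
  have hd : lam₁ - lam₂ ≠ 0 := sub_ne_zero_of_ne hne
  constructor
  · refine key_lemma lam₁ lam₂ h1 hd _ ?_ ?_
    · rintro a ha
      rw [Submodule.mem_map] at ha ⊢
      obtain ⟨c, hcC, hc⟩ := ha
      exact ⟨(cshift lam₁ c.1, cshift lam₁ c.2), hC1 c hcC, by simp [← hc]⟩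
    · rintro a ha
      rw [Submodule.mem_map] at ha ⊢
      obtain ⟨c, hcC, hc⟩ := ha
      exact ⟨(cshift lam₂ c.1, cshift lam₂ c.2), hC2 c hcC, by simp [← hc]⟩
  · refine key_lemma lam₁ lam₂ h1 hd _ ?_ ?_
    · rintro a ha
      rw [Submodule.mem_map] at ha ⊢
      obtain ⟨c, hcC, hc⟩ := ha
      exact ⟨(cshift lam₁ c.1, cshift lam₁ c.2), hC1 c hcC, by simp [← hc]⟩
    · rintro a ha
      rw [Submodule.mem_map] at ha ⊢
      obtain ⟨c, hcC, hc⟩ := ha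
      exact ⟨(cshift lam₂ c.1, cshift lam₂ c.2), hC2 c hcC, by simp [← hc]⟩
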